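/- Let γ : ℕ → ℂ with associated polynomials P_n(x) = Σ_{k=0}^n (γ_k/k!) D^k[x^n] for n ≥ 0. Then {P_n}_{n=0}^∞ is a monic orthogonal polynomial sequence (an OPS in which every P_n has leading coefficient 1) if and only if there exist α, β ∈ ℂ with α ≠ 0 such that for every k ≥ 0, γ_k equals the k-th derivative at 0 of the entire function z ↦ exp(−(α/2)z² − βz). -/

import Mathlib

open Polynomial Finset

namespace Stmt2Aux


/-- The polynomial `∑_{i=0}^n C(n,i) δ_{n-i} X^i`, i.e. `∑_k C(n,k) δ_k X^{n-k}`. -/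
noncomputable def Pol (δ : ℕ → ℂ) (n : ℕ) : Polynomial ℂ :=
  ∑ i ∈ Finset.range (n + 1), Polynomial.C ((n.choose i : ℂ) * δ (n - i)) * Polynomial.X ^ i

lemma pol_coeff (δ : ℕ → ℂ) (n i : ℕ) :
    (Pol δ n).coeff i = if i ≤ n then (n.choose i : ℂ) * δ (n - i) else 0 := by
  unfold Pol
  rw [finset_sum_coeff]
  simp only [coeff_C_mul, coeff_X_pow, mul_ite, mul_one, mul_zero]
  split_ifs with h
  · rw [Finset.sum_eq_single i]
    · simp
    · intro b _ hb; simp [Ne.symm hb]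
    · intro hi; exact absurd (Finset.mem_range.mpr (by omega)) hi
  · apply Finset.sum_eq_zero
    intro b hb
    simp only [Finset.mem_range] at hb
    rw [if_neg (by omega)]

lemma pol_natDegree_le (δ : ℕ → ℂ) (n : ℕ) : (Pol δ n).natDegree ≤ n := by
  rw [natDegree_le_iff_coeff_eq_zero]
  intro N hN
  rw [pol_coeff, if_neg (by omega)]

lemma pol_coeff_self (δ : ℕ → ℂ) (n : ℕ) : (Pol δ n).coeff n = δ 0 := by
  simp [pol_coeff]

lemma pol_monic (δ : ℕ → ℂ) (h : δ 0 = 1) (n : ℕ) : (Pol δ n).Monic :=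
  monic_of_natDegree_le_of_coeff_eq_one n (pol_natDegree_le δ n)
    (by rw [pol_coeff_self, h])

lemma pol_natDegree (δ : ℕ → ℂ) (h : δ 0 = 1) (n : ℕ) : (Pol δ n).natDegree = n :=
  le_antisymm (pol_natDegree_le δ n) <| le_natDegree_of_ne_zero (by
    rw [pol_coeff_self, h]; exact one_ne_zero)

lemma pol_degree (δ : ℕ → ℂ) (h : δ 0 = 1) (n : ℕ) : (Pol δ n).degree = n :=
  degree_eq_of_le_of_coeff_ne_zero
    (degree_le_of_natDegree_le (pol_natDegree_le δ n))
    (by rw [pol_coeff_self, h]; exact one_ne_zero)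

lemma pol_zero (δ : ℕ → ℂ) : Pol δ 0 = C (δ 0) := by
  simp [Pol]

lemma pol_one (δ : ℕ → ℂ) (h : δ 0 = 1) : Pol δ 1 = X + C (δ 1) := by
  simp [Pol, Finset.sum_range_succ, h]
  ring

/-- The key combinatorial identity `P_{n+1} = X P_n + Q_n` where `Q_n` is the `Pol`
of the shifted sequence. -/
lemma pol_succ (δ : ℕ → ℂ) (n : ℕ) :
    Pol δ (n + 1) = X * Pol δ n + Pol (fun j => δ (j + 1)) n := by
  ext i
  rw [coeff_add, pol_coeff, pol_coeff]
  cases i with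
  | zero =>
      rw [coeff_X_mul_zero]
      simp
  | succ m =>
      rw [coeff_X_mul, pol_coeff]
      by_cases hm : m + 1 ≤ n + 1
      · rw [if_pos hm, if_pos (by omega)]
        by_cases hm' : m + 1 ≤ n
        · rw [if_pos (by omega)]
          have h1 : n + 1 - (m + 1) = (n - (m+1)) + 1 := by omega
          have h2 : n - m = (n - (m+1)) + 1 := by omega
          rw [h1, h2]
          have : (n+1).choose (m+1) = n.choose m + n.choose (m+1) := Nat.choose_succ_succ n m
          rw [this]
          push_cast
          ring
        · have hmn : m = n := by omega
          subst hmn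
          rw [if_neg (by omega)]
          simp [Nat.choose_succ_succ]
      · rw [if_neg hm, if_neg (by omega), if_neg (by omega)]
        simp

/-- Three-term consequence of the recursion on `δ`. -/
lemma pol_rec (δ : ℕ → ℂ) (α : ℂ) (h0 : δ 0 = 1)
    (hrec : ∀ k : ℕ, δ (k + 2) = δ 1 * δ (k + 1) - α * ((k : ℂ) + 1) * δ k) (n : ℕ) :
    Pol (fun j => δ (j + 1)) n = C (δ 1) * Pol δ n - C (α * n) * Pol δ (n - 1) := by
  ext i
  rw [coeff_sub, coeff_C_mul, coeff_C_mul, pol_coeff, pol_coeff, pol_coeff]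
  rcases lt_trichotomy i n with hin | rfl | hin
  · obtain ⟨j, rfl⟩ : ∃ j, n = i + j + 1 := ⟨n - i - 1, by omega⟩
    rw [if_pos (by omega), if_pos (by omega), if_pos (by omega)]
    rw [show i + j + 1 - i = j + 1 from by omega, show i + j + 1 - 1 = i + j from by omega,
      show i + j - i = j from by omega]
    rw [show j + 1 + 1 = j + 2 from rfl, hrec j]
    have key : (((i+j+1).choose i : ℕ) : ℂ) * ((j:ℂ) + 1) = (((i+j).choose i : ℕ) : ℂ) * ((i:ℂ)+(j:ℂ)+1) := by
      have h := Nat.choose_mul_succ_eq (i + j) i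
      rw [show i + j + 1 - i = j + 1 from by omega] at h
      have h' := congrArg (Nat.cast : ℕ → ℂ) h
      push_cast at h'
      linear_combination h'.symm
    push_cast
    linear_combination (-(α * δ j)) * key
  · rw [if_pos le_rfl, if_pos le_rfl, Nat.sub_self, h0, Nat.choose_self]
    rcases Nat.eq_zero_or_pos i with rfl | hi0
    · simp [h0]
    · rw [if_neg (by omega)]
      push_cast
      ring
  · rw [if_neg (by omega), if_neg (by omega), if_neg (by omega)]
    ring

/-- Identification of the polynomials in the theorem statement with `Pol`. -/
lemma P_eq_pol (γ : ℕ → ℂ) (n : ℕ) :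
    (∑ k ∈ Finset.range (n + 1),
      Polynomial.C (γ k / (k.factorial : ℂ)) * Polynomial.derivative^[k] (Polynomial.X ^ n))
      = Pol γ n := by
  have hrefl := Finset.sum_range_reflect
    (fun k => Polynomial.C (γ k / (k.factorial : ℂ)) * Polynomial.derivative^[k] (Polynomial.X ^ n : Polynomial ℂ)) (n + 1)
  rw [← hrefl]
  unfold Pol
  apply Finset.sum_congr rfl
  intro i hi
  rw [Finset.mem_range] at hi
  rw [show n + 1 - 1 - i = n - i from by omega]
  rw [iterate_derivative_X_pow_eq_C_mul, show n - (n - i) = i from by omega,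
    Nat.descFactorial_eq_factorial_mul_choose, Nat.choose_symm (by omega : i ≤ n)]
  rw [← mul_assoc, ← C_mul]
  have hf : ((n - i).factorial : ℂ) ≠ 0 := Nat.cast_ne_zero.2 (Nat.factorial_ne_zero _)
  have harg : γ (n - i) / ((n - i).factorial : ℂ) * (((n - i).factorial * n.choose i : ℕ) : ℂ)
      = ((n.choose i : ℕ) : ℂ) * γ (n - i) := by
    push_cast
    field_simp
  rw [harg]

/-- Moments, defined so that the induced functional kills `Pol δ n` for `n ≥ 1`. -/
noncomputable def mu (δ : ℕ → ℂ) : ℕ → ℂ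
  | 0 => 1
  | n + 1 => -∑ k ∈ (Finset.range (n + 1)).attach,
      (Pol δ (n + 1)).coeff k.1 * mu δ k.1
  decreasing_by exact Nat.lt_succ_of_le (Nat.lt_succ_iff.mp (Finset.mem_range.mp k.2))

lemma mu_succ (δ : ℕ → ℂ) (n : ℕ) :
    mu δ (n + 1) = -∑ k ∈ Finset.range (n + 1), (Pol δ (n + 1)).coeff k * mu δ k := by
  rw [mu]
  congr 1
  exact Finset.sum_attach (Finset.range (n+1)) (fun k => (Pol δ (n + 1)).coeff k * mu δ k)

/-- The moment functional. -/
noncomputable def Lf (δ : ℕ → ℂ) : Polynomial ℂ →ₗ[ℂ] ℂ :=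
  Polynomial.lsum (fun n => mu δ n • LinearMap.id)

lemma Lf_apply (δ : ℕ → ℂ) (p : Polynomial ℂ) {m : ℕ} (hm : p.natDegree < m) :
    Lf δ p = ∑ i ∈ Finset.range m, mu δ i * p.coeff i := by
  show p.sum (fun n a => mu δ n • a) = _
  rw [Polynomial.sum_over_range' p (fun n => smul_zero _) m hm]
  simp [smul_eq_mul]

lemma Lf_one (δ : ℕ → ℂ) : Lf δ 1 = 1 := by
  rw [Lf_apply δ 1 (m := 1) (by simp)]
  simp [mu]

lemma Lf_pol (δ : ℕ → ℂ) (h0 : δ 0 = 1) (n : ℕ) (hn : 0 < n) : Lf δ (Pol δ n) = 0 := by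
  obtain ⟨m, rfl⟩ := Nat.exists_eq_add_of_lt hn
  rw [zero_add]
  rw [Lf_apply δ _ (m := m + 2) (Nat.lt_succ_of_le (pol_natDegree_le δ (m+1)))]
  rw [Finset.sum_range_succ, pol_coeff_self, h0, mul_one, mu_succ]
  rw [Finset.sum_congr rfl (fun k _ => mul_comm (mu δ k) ((Pol δ (m+1)).coeff k))]
  ring

lemma Lf_C_mul (δ : ℕ → ℂ) (a : ℂ) (p : Polynomial ℂ) : Lf δ (C a * p) = a * Lf δ p := by
  rw [← smul_eq_C_mul, map_smul, smul_eq_mul]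

section Main
variable (δ : ℕ → ℂ) (α : ℂ) (h0 : δ 0 = 1)
  (hrec : ∀ k : ℕ, δ (k + 2) = δ 1 * δ (k + 1) - α * ((k : ℂ) + 1) * δ k)

include h0 hrec

lemma three_term (n : ℕ) :
    X * Pol δ n = Pol δ (n + 1) - C (δ 1) * Pol δ n + C (α * n) * Pol δ (n - 1) := by
  rw [pol_succ, pol_rec δ α h0 hrec]
  ring

lemma key (k : ℕ) :
    (∀ n : ℕ, k < n → Lf δ (X ^ k * Pol δ n) = 0) ∧
      Lf δ (X ^ k * Pol δ k) = (k.factorial : ℂ) * α ^ k := by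
  induction k with
  | zero =>
      constructor
      · intro n hn
        simpa using Lf_pol δ h0 n hn
      · simp [pol_zero, h0, Lf_one]
  | succ k ih =>
      have step : ∀ n : ℕ, Lf δ (X ^ (k + 1) * Pol δ n) =
          Lf δ (X ^ k * Pol δ (n + 1)) - δ 1 * Lf δ (X ^ k * Pol δ n)
            + α * n * Lf δ (X ^ k * Pol δ (n - 1)) := by
        intro n
        have h3 : X ^ (k+1) * Pol δ n
            = X ^ k * Pol δ (n+1) - C (δ 1) * (X ^ k * Pol δ n)
              + C (α * n) * (X ^ k * Pol δ (n-1)) := by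
          have := three_term δ α h0 hrec n
          calc X ^ (k+1) * Pol δ n = X ^ k * (X * Pol δ n) := by ring
          _ = _ := by rw [this]; ring
        rw [h3, map_add, map_sub, Lf_C_mul, Lf_C_mul]
      constructor
      · intro n hn
        rw [step n, ih.1 (n+1) (by omega), ih.1 n (by omega), ih.1 (n-1) (by omega)]
        ring
      · rw [step (k+1), ih.1 (k+2) (by omega),
          show (k:ℕ) + 1 - 1 = k from by omega, ih.2]
        have h1 : Lf δ (X ^ k * Pol δ (k+1)) = 0 := ih.1 (k+1) (by omega)
        rw [h1, Nat.factorial_succ]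
        push_cast
        ring

lemma Lf_mul_lt {m n : ℕ} (hmn : m < n) : Lf δ (Pol δ m * Pol δ n) = 0 := by
  have hexp := Polynomial.as_sum_range' (Pol δ m) (m+1)
    (Nat.lt_succ_of_le (pol_natDegree_le δ m))
  calc Lf δ (Pol δ m * Pol δ n)
      = Lf δ (∑ i ∈ Finset.range (m+1), C ((Pol δ m).coeff i) * (X ^ i * Pol δ n)) := by
        congr 1
        conv_lhs => rw [hexp]
        rw [Finset.sum_mul]
        apply Finset.sum_congr rfl
        intro i _
        rw [← C_mul_X_pow_eq_monomial]
        ring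
    _ = 0 := by
        rw [map_sum]
        apply Finset.sum_eq_zero
        intro i hi
        rw [Lf_C_mul, (key δ α h0 hrec i).1 n (by rw [Finset.mem_range] at hi; omega),
          mul_zero]

lemma Lf_sq (n : ℕ) : Lf δ (Pol δ n * Pol δ n) = (n.factorial : ℂ) * α ^ n := by
  have hexp := Polynomial.as_sum_range' (Pol δ n) (n+1)
    (Nat.lt_succ_of_le (pol_natDegree_le δ n))
  have hgen : ∀ q : Polynomial ℂ, Lf δ (Pol δ n * q)
      = ∑ i ∈ Finset.range (n+1), (Pol δ n).coeff i * Lf δ (X ^ i * q) := by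
    intro q
    conv_lhs => rw [hexp, Finset.sum_mul]
    rw [map_sum]
    apply Finset.sum_congr rfl
    intro i _
    rw [← C_mul_X_pow_eq_monomial, mul_assoc, Lf_C_mul]
  rw [hgen (Pol δ n), Finset.sum_range_succ, pol_coeff_self, h0, one_mul,
    (key δ α h0 hrec n).2]
  rw [Finset.sum_eq_zero, zero_add]
  intro i hi
  rw [(key δ α h0 hrec i).1 n (by rw [Finset.mem_range] at hi; omega), mul_zero]

end Main
/-- Polynomials such that `f^(k)(z) = herm_k(z) f(z)` for `f(z) = exp(-(α/2)z² - βz)`. -/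
noncomputable def herm (α β : ℂ) : ℕ → Polynomial ℂ
  | 0 => 1
  | k + 1 => derivative (herm α β k) + (C (-α) * X + C (-β)) * herm α β k

lemma f_hasDerivAt (α β : ℂ) (z : ℂ) :
    HasDerivAt (fun z : ℂ => Complex.exp (-(α / 2) * z ^ 2 - β * z))
      ((-α * z - β) * Complex.exp (-(α / 2) * z ^ 2 - β * z)) z := by
  have hg : HasDerivAt (fun z : ℂ => -(α / 2) * z ^ 2 - β * z)
      (-(α / 2) * (2 * z ^ 1) - β * 1) z := by
    exact ((hasDerivAt_pow 2 z).const_mul (-(α / 2))).sub ((hasDerivAt_id z).const_mul β)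
  have := hg.cexp
  exact this.congr_deriv (by ring)

lemma iteratedDeriv_f (α β : ℂ) (k : ℕ) :
    iteratedDeriv k (fun z : ℂ => Complex.exp (-(α / 2) * z ^ 2 - β * z))
      = fun z : ℂ => (herm α β k).eval z * Complex.exp (-(α / 2) * z ^ 2 - β * z) := by
  induction k with
  | zero => funext z; simp [herm]
  | succ k ih =>
      rw [iteratedDeriv_succ, ih]
      funext z
      have hd : HasDerivAt (fun z : ℂ => (herm α β k).eval z
            * Complex.exp (-(α / 2) * z ^ 2 - β * z))
          ((derivative (herm α β k)).eval z * Complex.exp (-(α / 2) * z ^ 2 - β * z)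
            + (herm α β k).eval z * ((-α * z - β) * Complex.exp (-(α / 2) * z ^ 2 - β * z))) z :=
        ((herm α β k).hasDerivAt z).mul (f_hasDerivAt α β z)
      rw [hd.deriv]
      show _ = (herm α β (k+1)).eval z * _
      rw [herm]
      simp only [eval_add, eval_mul, eval_X, eval_C, eval_one]
      ring

lemma herm_derivative (α β : ℂ) (k : ℕ) :
    derivative (herm α β (k + 1)) = C (-α * ((k : ℂ) + 1)) * herm α β k := by
  induction k with
  | zero =>
      show derivative (derivative (herm α β 0) + (C (-α) * X + C (-β)) * herm α β 0) = _
      simp [herm]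
  | succ k ih =>
      have hkp1 : herm α β (k+1)
          = derivative (herm α β k) + (C (-α) * X + C (-β)) * herm α β k := rfl
      show derivative (derivative (herm α β (k+1)) + (C (-α) * X + C (-β)) * herm α β (k+1)) = _
      rw [derivative_add, derivative_mul, ih]
      simp only [derivative_C, derivative_add, derivative_mul, derivative_X, zero_mul, mul_one,
        zero_add, add_zero, derivative_C_mul]
      conv_lhs => rw [hkp1]
      conv_rhs => rw [hkp1]
      push_cast
      simp only [C_mul, C_add, C_neg, C_1]
      ring

/-- values of the iterated derivatives at 0 -/
noncomputable def ee (α β : ℂ) (k : ℕ) : ℂ := (herm α β k).eval 0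

lemma iteratedDeriv_f_zero (α β : ℂ) (k : ℕ) :
    iteratedDeriv k (fun z : ℂ => Complex.exp (-(α / 2) * z ^ 2 - β * z)) 0 = ee α β k := by
  rw [iteratedDeriv_f]
  simp [ee]

lemma ee_zero (α β : ℂ) : ee α β 0 = 1 := by simp [ee, herm]
lemma ee_one (α β : ℂ) : ee α β 1 = -β := by
  simp [ee, herm]
lemma ee_rec (α β : ℂ) (k : ℕ) :
    ee α β (k + 2) = ee α β 1 * ee α β (k + 1) - α * ((k : ℂ) + 1) * ee α β k := by
  show (herm α β (k+2)).eval 0 = _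
  rw [show k + 2 = (k+1) + 1 from rfl, herm, eval_add, eval_mul, herm_derivative]
  rw [ee_one]
  simp [ee]
  ring

/-- Every polynomial of degree ≤ m is a combination of `Q 0, …, Q m`. -/
lemma span_lemma (Q : ℕ → Polynomial ℂ) (hmo : ∀ n, (Q n).Monic)
    (hdeg : ∀ n, (Q n).natDegree = n) :
    ∀ (m : ℕ) (p : Polynomial ℂ), p.degree ≤ (m : ℕ) →
      ∃ d : ℕ → ℂ, p = ∑ j ∈ Finset.range (m + 1), C (d j) * Q j := by
  intro m
  induction m with
  | zero =>
      intro p hp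
      refine ⟨fun _ => p.coeff 0, ?_⟩
      have hq0 : Q 0 = 1 := (hmo 0).natDegree_eq_zero.mp (hdeg 0)
      rw [Finset.sum_range_one, hq0, mul_one, ← eq_C_of_degree_le_zero (by exact_mod_cast hp)]
  | succ m ih =>
      intro p hp
      have hq : (Q (m+1)).coeff (m+1) = 1 := by
        have h := (hmo (m+1)).coeff_natDegree
        rwa [hdeg] at h
      have hdq : (p - C (p.coeff (m+1)) * Q (m+1)).degree ≤ (m : ℕ) := by
        rw [degree_le_iff_coeff_zero]
        intro i hi
        have hi' : m < i := by exact_mod_cast hi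
        rw [coeff_sub, coeff_C_mul]
        rcases eq_or_lt_of_le (Nat.succ_le_of_lt hi') with he | hlt
        · rw [← he, hq, mul_one, sub_self]
        · have h1 : p.coeff i = 0 := coeff_eq_zero_of_degree_lt
            (lt_of_le_of_lt hp (by exact_mod_cast hlt))
          have h2 : (Q (m+1)).coeff i = 0 := coeff_eq_zero_of_natDegree_lt (by rw [hdeg]; omega)
          rw [h1, h2, mul_zero, sub_zero]
      obtain ⟨d, hd⟩ := ih _ hdq
      refine ⟨Function.update d (m+1) (p.coeff (m+1)), ?_⟩
      rw [Finset.sum_range_succ, Function.update_self]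
      have hsum : ∑ j ∈ Finset.range (m+1), C (Function.update d (m+1) (p.coeff (m+1)) j) * Q j
          = ∑ j ∈ Finset.range (m+1), C (d j) * Q j := by
        apply Finset.sum_congr rfl
        intro j hj
        rw [Function.update_of_ne (by rw [Finset.mem_range] at hj; omega)]
      rw [hsum, ← hd]
      ring

/-- `L` kills `p * Q n` whenever `deg p < n`. -/
lemma olow (Q : ℕ → Polynomial ℂ) (hmo : ∀ n, (Q n).Monic) (hdeg : ∀ n, (Q n).natDegree = n)
    (L : Polynomial ℂ →ₗ[ℂ] ℂ) (horth : ∀ m n, m ≠ n → L (Q m * Q n) = 0) :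
    ∀ (n : ℕ) (p : Polynomial ℂ), p.degree < (n : ℕ) → L (p * Q n) = 0 := by
  intro n p hp
  cases n with
  | zero =>
      have hp0 : p = 0 := by
        rw [← Polynomial.degree_eq_bot]
        rcases eq_or_ne p 0 with rfl | h
        · exact degree_zero
        · exfalso
          rw [degree_eq_natDegree h] at hp
          exact absurd hp (by exact_mod_cast Nat.not_lt_zero _)
      simp [hp0]
  | succ m =>
      have hple : p.degree ≤ (m : ℕ) := by
        rcases eq_or_ne p 0 with rfl | h
        · simp
        · rw [degree_eq_natDegree h] at hp ⊢
          exact_mod_cast Nat.lt_succ_iff.mp (by exact_mod_cast hp)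
      obtain ⟨d, hd⟩ := span_lemma Q hmo hdeg m p hple
      rw [hd, Finset.sum_mul, map_sum]
      apply Finset.sum_eq_zero
      intro j hj
      rw [mul_assoc, ← smul_eq_C_mul, map_smul, horth j (m+1)
        (by rw [Finset.mem_range] at hj; omega), smul_eq_mul, mul_zero]

/-- The heart of the forward direction. -/
lemma forward (γ : ℕ → ℂ) (L : Polynomial ℂ →ₗ[ℂ] ℂ) (h0 : γ 0 = 1)
    (horth : ∀ m n, m ≠ n → L (Pol γ m * Pol γ n) = 0)
    (hne : ∀ n, L (Pol γ n * Pol γ n) ≠ 0) :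
    ∃ α : ℂ, α ≠ 0 ∧ ∀ k : ℕ, γ (k + 2) = γ 1 * γ (k + 1) - α * ((k : ℂ) + 1) * γ k := by
  have hmo := pol_monic γ h0
  have hdeg := pol_natDegree γ h0
  have holow := olow (Pol γ) hmo hdeg L horth
  -- main decomposition
  have main : ∀ m : ℕ, ∃ a b : ℂ,
      Pol (fun j => γ (j + 1)) (m + 1) = C a * Pol γ (m + 1) + C b * Pol γ m ∧
      L (Pol (fun j => γ (j + 1)) (m + 1) * Pol γ m) = b * L (Pol γ m * Pol γ m) := by
    intro m
    set r := Pol (fun j => γ (j + 1)) (m + 1) with hrdef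
    have hrdeg : r.degree ≤ ((m + 1 : ℕ) : ℕ) :=
      (degree_le_natDegree).trans (by exact_mod_cast pol_natDegree_le _ (m+1))
    obtain ⟨d, hd⟩ := span_lemma (Pol γ) hmo hdeg (m + 1) r hrdeg
    have hone : ∀ j, j ≤ m + 1 → L (r * Pol γ j) = d j * L (Pol γ j * Pol γ j) := by
      intro j hjle
      rw [hd, Finset.sum_mul, map_sum, Finset.sum_eq_single j]
      · rw [mul_assoc, ← smul_eq_C_mul, map_smul, smul_eq_mul]
      · intro i _ hij
        rw [mul_assoc, ← smul_eq_C_mul, map_smul, horth i j hij, smul_eq_mul, mul_zero]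
      · intro hj; exact absurd (Finset.mem_range.mpr (by omega)) hj
    have hrL : ∀ j, j < m → L (r * Pol γ j) = 0 := by
      intro j hj
      have hre : r = Pol γ (m + 2) - X * Pol γ (m + 1) := by
        rw [pol_succ γ (m+1)]; ring
      rw [hre, sub_mul, map_sub, horth (m+2) j (by omega)]
      have hcomm : X * Pol γ (m+1) * Pol γ j = (X * Pol γ j) * Pol γ (m+1) := by ring
      rw [hcomm, holow (m+1) (X * Pol γ j) ?_, sub_zero]
      · calc (X * Pol γ j).degree ≤ X.degree + (Pol γ j).degree := degree_mul_le _ _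
          _ ≤ 1 + j := by
              apply add_le_add degree_X_le
              exact degree_le_natDegree.trans (by exact_mod_cast le_of_eq (hdeg j))
          _ < ((m + 1 : ℕ) : WithBot ℕ) := by exact_mod_cast (by omega : 1 + j < m + 1)
    have hdz : ∀ j, j < m → d j = 0 := by
      intro j hj
      have h1 := hrL j hj
      rw [hone j (by omega)] at h1
      exact (mul_eq_zero.mp h1).resolve_right (hne j)
    refine ⟨d (m+1), d m, ?_, hone m (by omega)⟩
    rw [hd, Finset.sum_range_succ, Finset.sum_range_succ, Finset.sum_eq_zero, zero_add]
    · ring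
    · intro j hj
      rw [hdz j (by rw [Finset.mem_range] at hj; omega), map_zero, zero_mul]
  -- extract scalar equations
  have coeffs : ∀ m : ℕ, ∃ b : ℂ,
      b = ((m : ℂ) + 1) * (γ 2 - γ 1 * γ 1) ∧
      γ (m + 2) = γ 1 * γ (m + 1) + b * γ m ∧
      L (Pol (fun j => γ (j + 1)) (m + 1) * Pol γ m) = b * L (Pol γ m * Pol γ m) := by
    intro m
    obtain ⟨a, b, heq, hLb⟩ := main m
    have e1 : γ 1 = a := by
      have h := congrArg (fun p => Polynomial.coeff p (m+1)) heq
      simp only [coeff_add, coeff_C_mul] at h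
      rw [pol_coeff_self, pol_coeff_self, pol_coeff γ m (m+1), if_neg (by omega)] at h
      rw [h0] at h
      simpa using h
    have e2 : ((m:ℂ) + 1) * γ 2 = a * (((m:ℂ) + 1) * γ 1) + b := by
      have h := congrArg (fun p => Polynomial.coeff p m) heq
      simp only [coeff_add, coeff_C_mul] at h
      rw [pol_coeff _ (m+1) m, if_pos (by omega), pol_coeff γ (m+1) m, if_pos (by omega),
        pol_coeff_self, h0, Nat.choose_succ_self_right,
        show m + 1 - m = 1 from by omega] at h
      push_cast at h
      simpa using h
    have e3 : γ (m + 2) = a * γ (m + 1) + b * γ m := by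
      have h := congrArg (fun p => Polynomial.coeff p 0) heq
      simp only [coeff_add, coeff_C_mul] at h
      rw [pol_coeff _ (m+1) 0, if_pos (by omega), pol_coeff γ (m+1) 0, if_pos (by omega),
        pol_coeff γ m 0, if_pos (by omega), Nat.choose_zero_right] at h
      simpa using h
    refine ⟨b, by linear_combination (((m:ℂ)+1) * γ 1) * e1 - e2, ?_, hLb⟩
    rw [e3, ← e1]
  refine ⟨γ 1 * γ 1 - γ 2, ?_, ?_⟩
  · -- α ≠ 0 via m = 0
    obtain ⟨b, hbval, _, hLb⟩ := coeffs 0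
    have hb : b = -(γ 1 * γ 1 - γ 2) := by rw [hbval]; ring
    intro hzero
    rw [hzero, neg_zero] at hb
    subst hb
    rw [zero_mul] at hLb
    -- show LHS of hLb is nonzero
    have hP0 : Pol γ 0 = 1 := by rw [pol_zero, h0, map_one]
    have hre : Pol (fun j => γ (j + 1)) 1 = Pol γ 2 - X * Pol γ 1 := by
      rw [pol_succ γ 1]; ring
    have h20 : L (Pol γ 2) = 0 := by
      have h := horth 2 0 (by omega); rwa [hP0, mul_one] at h
    have h10 : L (Pol γ 1) = 0 := by
      have h := horth 1 0 (by omega); rwa [hP0, mul_one] at h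
    rw [hre, hP0, mul_one, map_sub, h20, zero_sub, neg_eq_zero] at hLb
    have hX : (X : Polynomial ℂ) = Pol γ 1 - C (γ 1) := by rw [pol_one γ h0]; ring
    rw [hX, sub_mul, map_sub, ← smul_eq_C_mul, map_smul, h10, smul_eq_mul, mul_zero,
      sub_zero] at hLb
    exact hne 1 hLb
  · intro k
    obtain ⟨b, hbval, hrec, _⟩ := coeffs k
    rw [hrec, hbval]
    ring


end Stmt2Aux

open Stmt2Aux in
/-- The sequence `P n = ∑_{k=0}^n (γ k / k!) D^k[x^n]` is a *monic*
orthogonal polynomial sequence iff the `γ k` are the derivatives at 0 of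
`z ↦ exp(-(α/2)z² - βz)` for some `α ≠ 0`. -/
theorem stmt_2 (γ : ℕ → ℂ) (P : ℕ → Polynomial ℂ)
    (hP : ∀ n : ℕ, P n = ∑ k ∈ Finset.range (n + 1),
      Polynomial.C (γ k / (k.factorial : ℂ)) * Polynomial.derivative^[k] (Polynomial.X ^ n)) :
    ((∀ n : ℕ, (P n).Monic) ∧
      ∃ L : Polynomial ℂ →ₗ[ℂ] ℂ,
        (∀ n : ℕ, (P n).degree = n) ∧
        (∀ m n : ℕ, m ≠ n → L (P m * P n) = 0) ∧
        (∀ n : ℕ, L (P n ^ 2) ≠ 0)) ↔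
    (∃ α β : ℂ, α ≠ 0 ∧
      ∀ k : ℕ, γ k =
        iteratedDeriv k (fun z : ℂ => Complex.exp (-(α / 2) * z ^ 2 - β * z)) 0) := by
  have hPe : ∀ n, P n = Pol γ n := fun n => by rw [hP n, P_eq_pol]
  constructor
  · rintro ⟨hmon, L, _hdeg, horth, hsq⟩
    have h0 : γ 0 = 1 := by
      have h := hmon 0
      rw [hPe 0, pol_zero] at h
      simpa [Polynomial.Monic, Polynomial.leadingCoeff] using h
    obtain ⟨α, hα, hrec⟩ := forward γ L h0
      (fun m n hmn => by rw [← hPe, ← hPe]; exact horth m n hmn)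
      (fun n => by rw [← hPe]; have := hsq n; rwa [pow_two] at this)
    refine ⟨α, -γ 1, hα, ?_⟩
    have key : ∀ k, γ k = ee α (-γ 1) k ∧ γ (k + 1) = ee α (-γ 1) (k + 1) := by
      intro k
      induction k with
      | zero =>
          constructor
          · rw [ee_zero, h0]
          · rw [ee_one, neg_neg]
      | succ k ih =>
          refine ⟨ih.2, ?_⟩
          rw [show k + 1 + 1 = k + 2 from rfl, hrec k, ee_rec, ee_one, neg_neg,
            ← ih.1, ← ih.2]
    intro k
    rw [iteratedDeriv_f_zero]
    exact (key k).1
  · rintro ⟨α, β, hα, hiter⟩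
    have hg : ∀ k, γ k = ee α β k := fun k => by rw [hiter k, iteratedDeriv_f_zero]
    have h0 : γ 0 = 1 := by rw [hg 0, ee_zero]
    have hrec : ∀ k : ℕ, γ (k + 2) = γ 1 * γ (k + 1) - α * ((k : ℂ) + 1) * γ k := by
      intro k
      rw [hg (k + 2), hg (k + 1), hg k, hg 1, ee_rec]
    constructor
    · intro n; rw [hPe]; exact pol_monic γ h0 n
    · refine ⟨Lf γ, fun n => by rw [hPe]; exact pol_degree γ h0 n, ?_, ?_⟩
      · intro m n hmn
        rw [hPe, hPe]
        rcases hmn.lt_or_gt with h | h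
        · exact Lf_mul_lt γ α h0 hrec h
        · rw [mul_comm]; exact Lf_mul_lt γ α h0 hrec h
      · intro n
        rw [hPe, pow_two, Lf_sq γ α h0 hrec n]
        exact mul_ne_zero (Nat.cast_ne_zero.2 (Nat.factorial_ne_zero n)) (pow_ne_zero n hα)
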